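/- arXiv:1612.06247 — 3 statements merged into one kernel-verified Lean document; each statement's English description precedes it below -/
import Mathlib

section
/- Let L = a⁺b⁺ over A = {a,b}. The closure of the set of left quotients of L under finite intersections and finite unions has exactly seven elements: A*, L, a*b⁺, a*b⁺ ∪ {λ}, b*, b⁺, and ∅. -/
def leftQuot {A : Type*} (u : List A) (L : Set (List A)) : Set (List A) :=
  {w | u ++ w ∈ L}

def Lab : Set (List (Fin 2)) :=
  {w | ∃ m n : ℕ, 1 ≤ m ∧ 1 ≤ n ∧ w = List.replicate m 0 ++ List.replicate n 1}

def Kab : Set (List (Fin 2)) :=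
  {w | ∃ m n : ℕ, 1 ≤ n ∧ w = List.replicate m 0 ++ List.replicate n 1}

def bStar : Set (List (Fin 2)) := {w | ∃ n : ℕ, w = List.replicate n 1}

def bPlus : Set (List (Fin 2)) := {w | ∃ n : ℕ, 1 ≤ n ∧ w = List.replicate n 1}

lemma cons_rep {x : Fin 2} {w : List (Fin 2)} {m n : ℕ}
    (h : x :: w = List.replicate m 0 ++ List.replicate n 1) :
    (∃ m', m = m' + 1 ∧ x = 0 ∧ w = List.replicate m' 0 ++ List.replicate n 1) ∨
    (m = 0 ∧ ∃ n', n = n' + 1 ∧ x = 1 ∧ w = List.replicate n' 1) := by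
  cases m with
  | zero =>
    cases n with
    | zero => simp at h
    | succ n' =>
      right
      rw [List.replicate_succ] at h
      simp at h
      exact ⟨rfl, n', rfl, h.1, h.2⟩
  | succ m' =>
    left
    rw [List.replicate_succ] at h
    simp at h
    exact ⟨m', rfl, h.1, h.2⟩

lemma leftQuot_nil (L : Set (List (Fin 2))) : leftQuot [] L = L := by
  ext w; simp [leftQuot]

lemma leftQuot_cons (x : Fin 2) (u : List (Fin 2)) (L : Set (List (Fin 2))) :
    leftQuot (x :: u) L = leftQuot u (leftQuot [x] L) := by
  ext w; simp [leftQuot]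

lemma q_Lab_0 : leftQuot [0] Lab = Kab := by
  ext w
  constructor
  · rintro ⟨m, n, hm, hn, h⟩
    rcases cons_rep h with ⟨m', rfl, -, rfl⟩ | ⟨rfl, n', rfl, hx, -⟩
    · exact ⟨m', n, hn, rfl⟩
    · exact absurd hx (by decide)
  · rintro ⟨m, n, hn, rfl⟩
    exact ⟨m + 1, n, Nat.le_add_left _ _, hn, by rw [List.replicate_succ]; rfl⟩

lemma q_Lab_1 : leftQuot [1] Lab = ∅ := by
  ext w
  simp only [Set.mem_empty_iff_false, iff_false]
  rintro ⟨m, n, hm, hn, h⟩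
  rcases cons_rep h with ⟨m', rfl, hx, -⟩ | ⟨rfl, -⟩
  · exact absurd hx (by decide)
  · omega

lemma q_Kab_0 : leftQuot [0] Kab = Kab := by
  ext w
  constructor
  · rintro ⟨m, n, hn, h⟩
    rcases cons_rep h with ⟨m', rfl, -, rfl⟩ | ⟨rfl, n', rfl, hx, -⟩
    · exact ⟨m', n, hn, rfl⟩
    · exact absurd hx (by decide)
  · rintro ⟨m, n, hn, rfl⟩
    exact ⟨m + 1, n, hn, by rw [List.replicate_succ]; rfl⟩

lemma q_Kab_1 : leftQuot [1] Kab = bStar := by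
  ext w
  constructor
  · rintro ⟨m, n, hn, h⟩
    rcases cons_rep h with ⟨m', rfl, hx, -⟩ | ⟨rfl, n', rfl, -, rfl⟩
    · exact absurd hx (by decide)
    · exact ⟨n', rfl⟩
  · rintro ⟨n, rfl⟩
    exact ⟨0, n + 1, Nat.le_add_left _ _, by rw [List.replicate_succ]; rfl⟩

lemma q_bStar_0 : leftQuot [0] bStar = ∅ := by
  ext w
  simp only [Set.mem_empty_iff_false, iff_false]
  rintro ⟨n, h⟩
  cases n with
  | zero => exact absurd h (by simp)
  | succ n' =>
    rw [List.replicate_succ] at h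
    simp at h

lemma q_bStar_1 : leftQuot [1] bStar = bStar := by
  ext w
  constructor
  · rintro ⟨n, h⟩
    cases n with
    | zero => exact absurd h (by simp)
    | succ n' =>
      rw [List.replicate_succ] at h
      simp at h
      exact ⟨n', h⟩
  · rintro ⟨n, rfl⟩
    exact ⟨n + 1, by rw [List.replicate_succ]; rfl⟩

lemma q_empty (u : List (Fin 2)) : leftQuot u (∅ : Set (List (Fin 2))) = ∅ := by
  ext w; simp [leftQuot]

lemma quot_step (x : Fin 2) (L : Set (List (Fin 2)))
    (hL : L ∈ ({Lab, Kab, bStar, ∅} : Set (Set (List (Fin 2))))) :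
    leftQuot [x] L ∈ ({Lab, Kab, bStar, ∅} : Set (Set (List (Fin 2)))) := by
  fin_cases x <;>
    rcases hL with rfl | rfl | rfl | rfl <;>
      simp [q_Lab_0, q_Lab_1, q_Kab_0, q_Kab_1, q_bStar_0, q_bStar_1, q_empty]

lemma quot_closed (u : List (Fin 2)) (L : Set (List (Fin 2)))
    (hL : L ∈ ({Lab, Kab, bStar, ∅} : Set (Set (List (Fin 2))))) :
    leftQuot u L ∈ ({Lab, Kab, bStar, ∅} : Set (Set (List (Fin 2)))) := by
  induction u generalizing L with
  | nil => rwa [leftQuot_nil]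
  | cons x u ih => rw [leftQuot_cons]; exact ih _ (quot_step x L hL)

lemma quot_mem (u : List (Fin 2)) :
    leftQuot u Lab ∈ ({Lab, Kab, bStar, ∅} : Set (Set (List (Fin 2)))) :=
  quot_closed u Lab (by left; rfl)

-- basic inclusions
lemma Lab_subset_Kab : Lab ⊆ Kab := by
  rintro w ⟨m, n, hm, hn, rfl⟩; exact ⟨m, n, hn, rfl⟩

lemma bPlus_subset_Kab : bPlus ⊆ Kab := by
  rintro w ⟨n, hn, rfl⟩; exact ⟨0, n, hn, by simp⟩

lemma bPlus_subset_bStar : bPlus ⊆ bStar := by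
  rintro w ⟨n, hn, rfl⟩; exact ⟨n, rfl⟩

lemma zero_mem_Lab {w : List (Fin 2)} (h : w ∈ Lab) : (0 : Fin 2) ∈ w := by
  obtain ⟨m, n, hm, hn, rfl⟩ := h
  rw [List.mem_append]
  exact Or.inl (List.mem_replicate.mpr ⟨by omega, rfl⟩)

lemma bStar_all_one {w : List (Fin 2)} (h : w ∈ bStar) : ∀ x ∈ w, x = 1 := by
  obtain ⟨n, rfl⟩ := h
  intro x hx
  exact (List.mem_replicate.mp hx).2

lemma bStar_eq : bStar = bPlus ∪ {[]} := by
  ext w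
  constructor
  · rintro ⟨n, rfl⟩
    cases n with
    | zero => right; rfl
    | succ n' => left; exact ⟨n' + 1, Nat.le_add_left _ _, rfl⟩
  · rintro (⟨n, hn, rfl⟩ | h)
    · exact ⟨n, rfl⟩
    · exact ⟨0, h⟩

-- intersection identities
lemma Lab_inter_bStar : Lab ∩ bStar = ∅ := by
  ext w
  simp only [Set.mem_inter_iff, Set.mem_empty_iff_false, iff_false, not_and]
  intro h1 h2
  exact absurd (bStar_all_one h2 0 (zero_mem_Lab h1)) (by decide)

lemma Lab_inter_bPlus : Lab ∩ bPlus = ∅ := by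
  rw [← Set.subset_empty_iff, ← Lab_inter_bStar]
  exact Set.inter_subset_inter_right _ bPlus_subset_bStar

lemma Kab_inter_bStar : Kab ∩ bStar = bPlus := by
  ext w
  constructor
  · rintro ⟨⟨m, n, hn, h⟩, hs⟩
    cases m with
    | zero => exact ⟨n, hn, by simpa using h⟩
    | succ m' =>
      exfalso
      have h0 : (0 : Fin 2) ∈ w := by
        rw [h, List.mem_append]
        exact Or.inl (List.mem_replicate.mpr ⟨by omega, rfl⟩)
      exact absurd (bStar_all_one hs 0 h0) (by decide)
  · intro h
    exact ⟨bPlus_subset_Kab h, bPlus_subset_bStar h⟩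

lemma Kab_inter_bPlus : Kab ∩ bPlus = bPlus :=
  Set.inter_eq_self_of_subset_right bPlus_subset_Kab

lemma bStar_inter_bPlus : bStar ∩ bPlus = bPlus :=
  Set.inter_eq_self_of_subset_right bPlus_subset_bStar

lemma Lab_inter_Kab : Lab ∩ Kab = Lab :=
  Set.inter_eq_self_of_subset_left Lab_subset_Kab

-- union identities
lemma Lab_union_bPlus : Lab ∪ bPlus = Kab := by
  ext w
  constructor
  · rintro (h | h)
    · exact Lab_subset_Kab h
    · exact bPlus_subset_Kab h
  · rintro ⟨m, n, hn, rfl⟩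
    cases m with
    | zero => right; exact ⟨n, hn, by simp⟩
    | succ m' => left; exact ⟨m' + 1, n, Nat.le_add_left _ _, hn, rfl⟩

lemma Lab_union_Kab : Lab ∪ Kab = Kab :=
  Set.union_eq_self_of_subset_left Lab_subset_Kab

lemma Kab_union_bPlus : Kab ∪ bPlus = Kab :=
  Set.union_eq_self_of_subset_right bPlus_subset_Kab

lemma bStar_union_bPlus : bStar ∪ bPlus = bStar :=
  Set.union_eq_self_of_subset_right bPlus_subset_bStar

lemma Lab_union_bStar : Lab ∪ bStar = Kab ∪ {[]} := by
  rw [bStar_eq, ← Set.union_assoc, Lab_union_bPlus]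

lemma Kab_union_bStar : Kab ∪ bStar = Kab ∪ {[]} := by
  rw [bStar_eq, ← Set.union_assoc, Kab_union_bPlus]

lemma Lab_union_Kl : Lab ∪ (Kab ∪ {[]}) = Kab ∪ {[]} := by
  rw [← Set.union_assoc, Lab_union_Kab]

lemma Kab_union_Kl : Kab ∪ (Kab ∪ {[]}) = Kab ∪ {[]} := by
  rw [← Set.union_assoc, Set.union_self]

lemma bPlus_union_Kl : bPlus ∪ (Kab ∪ {[]}) = Kab ∪ {[]} := by
  rw [← Set.union_assoc, Set.union_comm bPlus, Kab_union_bPlus]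

lemma bStar_union_Kl : bStar ∪ (Kab ∪ {[]}) = Kab ∪ {[]} := by
  rw [Set.union_comm, ← Kab_union_bStar, Set.union_assoc, Set.union_self,
    Kab_union_bStar]

lemma Kl_union_bStar : (Kab ∪ {[]}) ∪ bStar = Kab ∪ {[]} := by
  rw [Set.union_comm]; exact bStar_union_Kl

lemma Kl_union_bPlus : (Kab ∪ {[]}) ∪ bPlus = Kab ∪ {[]} := by
  rw [Set.union_comm]; exact bPlus_union_Kl

def T7 : Set (Set (List (Fin 2))) :=
  {Set.univ, Lab, Kab, Kab ∪ {[]}, bStar, bPlus, ∅}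

def T6 : Set (Set (List (Fin 2))) := {Set.univ, Lab, Kab, bStar, bPlus, ∅}

lemma T6_subset_T7 : T6 ⊆ T7 := by
  intro S hS
  rcases hS with rfl | rfl | rfl | rfl | rfl | rfl <;>
    simp only [T7, Set.mem_insert_iff, Set.mem_singleton_iff] <;> tauto

lemma inter_closed_step (Q S : Set (List (Fin 2)))
    (hQ : Q ∈ ({Lab, Kab, bStar, ∅} : Set (Set (List (Fin 2))))) (hS : S ∈ T6) :
    Q ∩ S ∈ T6 := by
  rcases hQ with rfl | rfl | rfl | rfl <;>
    rcases hS with rfl | rfl | rfl | rfl | rfl | rfl <;>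
      simp only [T6, Set.inter_univ, Set.univ_inter, Set.inter_empty,
        Set.empty_inter, Set.inter_self,
        Lab_inter_Kab, Lab_inter_bStar, Lab_inter_bPlus, Kab_inter_bStar,
        Kab_inter_bPlus, bStar_inter_bPlus,
        Set.inter_comm Kab Lab, Set.inter_comm bStar Lab,
        Set.inter_comm bPlus Lab, Set.inter_comm bStar Kab,
        Set.inter_comm bPlus Kab, Set.inter_comm bPlus bStar,
        Set.mem_insert_iff, Set.mem_singleton_iff] <;>
      tauto

lemma inter_closed (U : Finset (List (Fin 2))) :
    (⋂ u ∈ U, leftQuot u Lab) ∈ T6 := by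
  induction U using Finset.induction_on with
  | empty => simp [T6]
  | insert _ _ hnotmem ih =>
    rw [Finset.set_biInter_insert]
    exact inter_closed_step _ _ (quot_mem _) ih

lemma union_closed_step (P S : Set (List (Fin 2))) (hP : P ∈ T7) (hS : S ∈ T7) :
    P ∪ S ∈ T7 := by
  rcases hP with rfl | rfl | rfl | rfl | rfl | rfl | rfl <;>
    rcases hS with rfl | rfl | rfl | rfl | rfl | rfl | rfl <;>
      simp only [T7, Set.union_univ, Set.univ_union, Set.union_empty,
        Set.empty_union, Set.union_self,
        Lab_union_Kab, Lab_union_Kl, Lab_union_bStar, Lab_union_bPlus,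
        Kab_union_Kl, Kab_union_bStar, Kab_union_bPlus,
        Kl_union_bStar, Kl_union_bPlus, bStar_union_bPlus,
        Set.union_comm Kab Lab, Set.union_comm (Kab ∪ {[]}) Lab,
        Set.union_comm bStar Lab, Set.union_comm bPlus Lab,
        Set.union_comm (Kab ∪ {[]}) Kab, Set.union_comm bStar Kab,
        Set.union_comm bPlus Kab, Set.union_comm bStar (Kab ∪ {[]}),
        Set.union_comm bPlus (Kab ∪ {[]}), Set.union_comm bPlus bStar,
        Set.mem_insert_iff, Set.mem_singleton_iff] <;>
      tauto

lemma biUnion_mem (𝒰 : Finset (Finset (List (Fin 2)))) :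
    (⋃ U ∈ 𝒰, ⋂ u ∈ U, leftQuot u Lab) ∈ T7 := by
  induction 𝒰 using Finset.induction_on with
  | empty => simp [T7]
  | insert _ _ hnotmem ih =>
    rw [Finset.set_biUnion_insert]
    exact union_closed_step _ _ (T6_subset_T7 (inter_closed _)) ih

-- concrete memberships
lemma m01_Lab : [0, 1] ∈ Lab := ⟨1, 1, le_refl 1, le_refl 1, rfl⟩
lemma m1_Kab : [1] ∈ Kab := ⟨0, 1, le_refl 1, rfl⟩
lemma nil_bStar : [] ∈ bStar := ⟨0, rfl⟩
lemma m1_bPlus : [1] ∈ bPlus := ⟨1, le_refl 1, rfl⟩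

lemma m1_not_Lab : [1] ∉ Lab := fun h => by
  have := zero_mem_Lab h; simp at this

lemma nil_not_Kab : [] ∉ Kab := by
  rintro ⟨m, n, hn, h⟩
  have := congrArg List.length h
  simp at this
  omega

lemma nil_not_Lab : [] ∉ Lab := fun h => nil_not_Kab (Lab_subset_Kab h)

lemma m01_not_bStar : [0, 1] ∉ bStar := fun h => by
  have := bStar_all_one h 0 (by simp); simp at this

lemma m01_not_bPlus : [0, 1] ∉ bPlus := fun h => m01_not_bStar (bPlus_subset_bStar h)

lemma nil_not_bPlus : [] ∉ bPlus := by
  rintro ⟨n, hn, h⟩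
  have := congrArg List.length h
  simp at this
  omega

lemma m10_not_Kab : [1, 0] ∉ Kab := by
  rintro ⟨m, n, hn, h⟩
  rcases cons_rep h with ⟨m', rfl, hx, -⟩ | ⟨rfl, n', rfl, -, hw⟩
  · exact absurd hx (by decide)
  · have h0 : (0 : Fin 2) ∈ List.replicate n' 1 := hw ▸ List.mem_singleton_self (0 : Fin 2)
    have := (List.mem_replicate.mp h0).2
    simp at this

lemma m10_not_Lab : [1, 0] ∉ Lab := fun h => m10_not_Kab (Lab_subset_Kab h)

lemma m10_not_bStar : [1, 0] ∉ bStar := fun h => by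
  have := bStar_all_one h 0 (by simp); simp at this

lemma m10_not_bPlus : [1, 0] ∉ bPlus := fun h => m10_not_bStar (bPlus_subset_bStar h)

lemma m10_not_Kl : [1, 0] ∉ Kab ∪ {[]} := by
  rintro (h | h)
  · exact m10_not_Kab h
  · simp at h

lemma ne_of_mem_not_mem {w : List (Fin 2)} {A B : Set (List (Fin 2))}
    (h1 : w ∈ A) (h2 : w ∉ B) : A ≠ B := fun h => h2 (h ▸ h1)

lemma l01 : leftQuot [0, 1] Lab = bStar := by
  rw [leftQuot_cons, q_Lab_0, q_Kab_1]

theorem lattice_closure_of_quotients :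
    {S : Set (List (Fin 2)) | ∃ 𝒰 : Finset (Finset (List (Fin 2))),
        S = ⋃ U ∈ 𝒰, ⋂ u ∈ U, leftQuot u Lab} =
      {Set.univ, Lab, Kab, Kab ∪ {[]}, bStar, bPlus, ∅} ∧
    [Set.univ, Lab, Kab, Kab ∪ {[]}, bStar, bPlus,
      (∅ : Set (List (Fin 2)))].Pairwise (· ≠ ·) := by
  constructor
  · ext S
    constructor
    · rintro ⟨𝒰, rfl⟩
      exact biUnion_mem 𝒰
    · intro hS
      simp only [Set.mem_insert_iff, Set.mem_singleton_iff] at hS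
      simp only [Set.mem_setOf_eq]
      rcases hS with rfl | rfl | rfl | rfl | rfl | rfl | rfl
      · exact ⟨{∅}, by simp⟩
      · exact ⟨{{[]}}, by simp [leftQuot_nil]⟩
      · exact ⟨{{[0]}}, by simp [q_Lab_0]⟩
      · refine ⟨{{[0]}, {[0, 1]}}, ?_⟩
        rw [Finset.set_biUnion_insert, Finset.set_biUnion_singleton,
          Finset.set_biInter_singleton, Finset.set_biInter_singleton,
          q_Lab_0, l01, Kab_union_bStar]
      · exact ⟨{{[0, 1]}}, by simp [l01]⟩
      · refine ⟨{{[0], [0, 1]}}, ?_⟩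
        rw [Finset.set_biUnion_singleton, Finset.set_biInter_insert,
          Finset.set_biInter_singleton, q_Lab_0, l01, Kab_inter_bStar]
      · exact ⟨∅, by simp⟩
  · simp only [List.pairwise_cons, List.mem_cons, List.mem_singleton,
      List.not_mem_nil, forall_eq_or_imp, forall_eq, ne_eq, List.Pairwise.nil]
    refine ⟨⟨?_, ?_, ?_, ?_, ?_, ?_, fun _ h => h.elim⟩,
      ⟨?_, ?_, ?_, ?_, ?_, fun _ h => h.elim⟩,
      ⟨?_, ?_, ?_, ?_, fun _ h => h.elim⟩,
      ⟨?_, ?_, ?_, fun _ h => h.elim⟩,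
      ⟨?_, ?_, fun _ h => h.elim⟩,
      ⟨?_, fun _ h => h.elim⟩,
      fun _ h => h.elim, trivial⟩
    · exact ne_of_mem_not_mem (Set.mem_univ [1, 0]) m10_not_Lab
    · exact ne_of_mem_not_mem (Set.mem_univ [1, 0]) m10_not_Kab
    · exact ne_of_mem_not_mem (Set.mem_univ [1, 0]) m10_not_Kl
    · exact ne_of_mem_not_mem (Set.mem_univ [1, 0]) m10_not_bStar
    · exact ne_of_mem_not_mem (Set.mem_univ [1, 0]) m10_not_bPlus
    · exact ne_of_mem_not_mem (Set.mem_univ []) (Set.notMem_empty [])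
    · exact (ne_of_mem_not_mem m1_Kab m1_not_Lab).symm
    · exact (ne_of_mem_not_mem (Or.inr rfl : ([] : List (Fin 2)) ∈ Kab ∪ {[]}) nil_not_Lab).symm
    · exact ne_of_mem_not_mem m01_Lab m01_not_bStar
    · exact ne_of_mem_not_mem m01_Lab m01_not_bPlus
    · exact ne_of_mem_not_mem m01_Lab (Set.notMem_empty _)
    · exact (ne_of_mem_not_mem (Or.inr rfl : ([] : List (Fin 2)) ∈ Kab ∪ {[]}) nil_not_Kab).symm
    · exact ne_of_mem_not_mem (Lab_subset_Kab m01_Lab) m01_not_bStar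
    · exact ne_of_mem_not_mem (Lab_subset_Kab m01_Lab) m01_not_bPlus
    · exact ne_of_mem_not_mem m1_Kab (Set.notMem_empty _)
    · exact ne_of_mem_not_mem (Or.inl (Lab_subset_Kab m01_Lab)) m01_not_bStar
    · exact ne_of_mem_not_mem (Or.inl (Lab_subset_Kab m01_Lab)) m01_not_bPlus
    · exact ne_of_mem_not_mem (Or.inr rfl : ([] : List (Fin 2)) ∈ Kab ∪ {[]})
        (Set.notMem_empty _)
    · exact ne_of_mem_not_mem nil_bStar nil_not_bPlus
    · exact ne_of_mem_not_mem nil_bStar (Set.notMem_empty _)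
    · exact ne_of_mem_not_mem m1_bPlus (Set.notMem_empty _)
end

section
/- Suppose the canonical automaton of a regular language L satisfies the Ambainis–Freivalds condition: for all words x, y and states f, g of the minimal automaton (states being left quotients of L), if f ≠ g, f∘x = g and g∘x = g, then g∘y = g for all y. Then for all words p, u, v, w and every state K (a left quotient s⁻¹L), we have K∘(p^ω u) ∪ (K∘(p^ω v) ∩ K∘w) = K∘(p^ω u) ∪ (K∘(p^ω w) ∩ K∘v), where p^ω denotes an idempotent power of p on the (finite) state set, i.e., a power p^m such that acting twice by p^m equals acting once. -/
def wpow {A : Type*} (p : List A) (m : ℕ) : List A := (List.replicate m p).flatten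

lemma leftQuot_append {A : Type*} (x s : List A) (L : Set (List A)) :
    leftQuot x (leftQuot s L) = leftQuot (s ++ x) L := by
  ext w; simp [leftQuot, List.append_assoc]

theorem AF_implies_lattice_identity {A : Type*} (L : Set (List A))
    (AF : ∀ (x y s t : List A),
      leftQuot s L ≠ leftQuot t L →
      leftQuot x (leftQuot s L) = leftQuot t L →
      leftQuot x (leftQuot t L) = leftQuot t L →
      leftQuot y (leftQuot t L) = leftQuot t L)
    (p u v w : List A) (m : ℕ) (hm : 1 ≤ m)
    (hidem : ∀ s : List A,
      leftQuot (wpow p m) (leftQuot (wpow p m) (leftQuot s L)) =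
        leftQuot (wpow p m) (leftQuot s L))
    (s : List A) :
    leftQuot (wpow p m ++ u) (leftQuot s L) ∪
      (leftQuot (wpow p m ++ v) (leftQuot s L) ∩ leftQuot w (leftQuot s L)) =
    leftQuot (wpow p m ++ u) (leftQuot s L) ∪
      (leftQuot (wpow p m ++ w) (leftQuot s L) ∩ leftQuot v (leftQuot s L)) := by
  set P := wpow p m with hP
  have key : ∀ z : List A,
      leftQuot (P ++ z) (leftQuot s L) = leftQuot z (leftQuot (s ++ P) L) := by
    intro z
    rw [leftQuot_append, leftQuot_append]
    rw [List.append_assoc]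
  by_cases h : leftQuot s L = leftQuot (s ++ P) L
  · have hw : leftQuot (P ++ w) (leftQuot s L) = leftQuot w (leftQuot s L) := by
      rw [key, ← h]
    have hv : leftQuot (P ++ v) (leftQuot s L) = leftQuot v (leftQuot s L) := by
      rw [key, ← h]
    rw [hw, hv, Set.inter_comm]
  · -- AF gives that leftQuot (s++P) L is a sink
    have hfix : leftQuot P (leftQuot (s ++ P) L) = leftQuot (s ++ P) L := by
      have := hidem s
      rw [leftQuot_append (wpow p m) s L] at this
      exact this
    have hPs : leftQuot P (leftQuot s L) = leftQuot (s ++ P) L := leftQuot_append P s L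
    have sink : ∀ y, leftQuot y (leftQuot (s ++ P) L) = leftQuot (s ++ P) L :=
      fun y => AF P y s (s ++ P) h hPs hfix
    have hu : leftQuot (P ++ u) (leftQuot s L) = leftQuot (s ++ P) L := by
      rw [key]; exact sink u
    have hv : leftQuot (P ++ v) (leftQuot s L) = leftQuot (s ++ P) L := by
      rw [key]; exact sink v
    have hw : leftQuot (P ++ w) (leftQuot s L) = leftQuot (s ++ P) L := by
      rw [key]; exact sink w
    rw [hu, hv, hw]
    simp [Set.union_eq_self_of_subset_right, Set.inter_subset_left]
end

section
/- Suppose the minimal automaton of a regular language L contains the forbidden configuration: states f ≠ g ≠ h and words x, y with f∘x = g, g∘x = g, and g∘y = h. Then there exist words p, u, v, w and a state K (a left quotient of L) such that K∘(p^ω u) ∪ (K∘(p^ω v) ∩ K∘w) ≠ K∘(p^ω u) ∪ (K∘(p^ω w) ∩ K∘v), where p^ω is an idempotent power of p on the finite state set. -/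
theorem lq_lq {A : Type*} (u v : List A) (S : Set (List A)) :
    leftQuot u (leftQuot v S) = leftQuot (v ++ u) S := by
  ext w; simp [leftQuot, List.append_assoc]

theorem lq_nil {A : Type*} (S : Set (List A)) : leftQuot ([] : List A) S = S := by
  ext w; simp [leftQuot]

theorem mem_nil_lq {A : Type*} (a : List A) (S : Set (List A)) :
    ([] ∈ leftQuot a S) ↔ a ∈ S := by simp [leftQuot]

theorem wpow_succ {A : Type*} (p : List A) (m : ℕ) :
    wpow p (m + 1) = p ++ wpow p m := by
  simp [wpow, List.replicate_succ]

theorem exists_idem_iterate {β : Type*} [Finite β] (φ : β → β) :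
    ∃ m : ℕ, 1 ≤ m ∧ φ^[m + m] = φ^[m] := by
  obtain ⟨a, b, hne, heq⟩ := Finite.exists_ne_map_eq_of_infinite (fun n : ℕ => φ^[n])
  obtain ⟨i, j, hlt, heqij⟩ : ∃ i j : ℕ, i < j ∧ φ^[i] = φ^[j] := by
    rcases lt_or_gt_of_ne hne with h | h
    · exact ⟨a, b, h, heq⟩
    · exact ⟨b, a, h, heq.symm⟩
  have hd : 1 ≤ j - i := by omega
  have step : ∀ k, i ≤ k → φ^[k + (j - i)] = φ^[k] := by
    intro k hk
    have h1 : k + (j - i) = (k - i) + j := by omega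
    have h2 : (k - i) + i = k := by omega
    rw [h1, Function.iterate_add, ← heqij, ← Function.iterate_add, h2]
  have mult : ∀ t k, i ≤ k → φ^[k + t * (j - i)] = φ^[k] := by
    intro t
    induction t with
    | zero => intro k hk; simp
    | succ t ih =>
      intro k hk
      have h3 : k + (t + 1) * (j - i) = (k + t * (j - i)) + (j - i) := by ring
      rw [h3, step _ (by omega), ih k hk]
  refine ⟨(i + 1) * (j - i), ?_, ?_⟩
  · have := Nat.mul_pos (show 0 < i + 1 by omega) (show 0 < j - i by omega)
    omega
  · have hle : i ≤ (i + 1) * (j - i) := by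
      have h4 : (i + 1) * 1 ≤ (i + 1) * (j - i) := Nat.mul_le_mul_left _ hd
      omega
    exact mult (i + 1) ((i + 1) * (j - i)) hle

theorem exists_global_idem {A : Type*} (L : Set (List A))
    (hfin : {S : Set (List A) | ∃ u : List A, S = leftQuot u L}.Finite) (x : List A) :
    ∃ m : ℕ, 1 ≤ m ∧ ∀ s' : List A,
      leftQuot (wpow x m) (leftQuot (wpow x m) (leftQuot s' L)) =
        leftQuot (wpow x m) (leftQuot s' L) := by
  haveI : Finite ({S : Set (List A) | ∃ u : List A, S = leftQuot u L}) := hfin.to_subtype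
  let Φ : {S : Set (List A) | ∃ u : List A, S = leftQuot u L} →
      {S : Set (List A) | ∃ u : List A, S = leftQuot u L} := fun S =>
    ⟨leftQuot x S.1, by
      obtain ⟨u, hu⟩ := S.2
      exact ⟨u ++ x, by rw [hu]; exact lq_lq x u L⟩⟩
  have hiter : ∀ (n : ℕ) (S : {S : Set (List A) | ∃ u : List A, S = leftQuot u L}),
      (Φ^[n] S).1 = leftQuot (wpow x n) S.1 := by
    intro n
    induction n with
    | zero =>
      intro S
      rw [Function.iterate_zero_apply, show wpow x (0 : ℕ) = ([] : List A) from rfl, lq_nil]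
    | succ n ih =>
      intro S
      rw [Function.iterate_succ_apply, ih (Φ S)]
      show leftQuot (wpow x n) (leftQuot x S.1) = leftQuot (wpow x (n + 1)) S.1
      rw [wpow_succ]
      exact lq_lq (wpow x n) x S.1
  obtain ⟨m, hm1, hmm⟩ := exists_idem_iterate Φ
  refine ⟨m, hm1, fun s' => ?_⟩
  have hS : leftQuot s' L ∈ {S : Set (List A) | ∃ u : List A, S = leftQuot u L} := ⟨s', rfl⟩
  have h1 : (Φ^[m] ⟨leftQuot s' L, hS⟩).1 = leftQuot (wpow x m) (leftQuot s' L) :=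
    hiter m ⟨leftQuot s' L, hS⟩
  have h2 : (Φ^[m] (Φ^[m] ⟨leftQuot s' L, hS⟩)).1 =
      leftQuot (wpow x m) ((Φ^[m] ⟨leftQuot s' L, hS⟩).1) := hiter m _
  rw [← h1, ← h2, ← Function.iterate_add_apply, hmm, h1]

theorem forbidden_config_violates_identity {A : Type*} (L : Set (List A))
    (hfin : {S : Set (List A) | ∃ u : List A, S = leftQuot u L}.Finite)
    (s t r x y : List A)
    (hfg : leftQuot s L ≠ leftQuot t L)
    (hgh : leftQuot t L ≠ leftQuot r L)
    (hfx : leftQuot x (leftQuot s L) = leftQuot t L)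
    (hgx : leftQuot x (leftQuot t L) = leftQuot t L)
    (hgy : leftQuot y (leftQuot t L) = leftQuot r L) :
    ∃ (p u v w : List A) (m : ℕ), 1 ≤ m ∧
      (∀ s' : List A,
        leftQuot (wpow p m) (leftQuot (wpow p m) (leftQuot s' L)) =
          leftQuot (wpow p m) (leftQuot s' L)) ∧
      ∃ s' : List A,
        leftQuot (wpow p m ++ u) (leftQuot s' L) ∪
          (leftQuot (wpow p m ++ v) (leftQuot s' L) ∩ leftQuot w (leftQuot s' L)) ≠
        leftQuot (wpow p m ++ u) (leftQuot s' L) ∪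
          (leftQuot (wpow p m ++ w) (leftQuot s' L) ∩ leftQuot v (leftQuot s' L)) := by
  classical
  obtain ⟨m, hm1, hidem⟩ := exists_global_idem L hfin x
  -- g is stable under powers of x
  have hgE : ∀ k : ℕ, leftQuot (wpow x k) (leftQuot t L) = leftQuot t L := by
    intro k
    induction k with
    | zero => rw [show wpow x (0 : ℕ) = ([] : List A) from rfl, lq_nil]
    | succ k ih =>
      rw [wpow_succ, ← lq_lq, hgx, ih]
  -- f maps to g under x^m
  have hfE : leftQuot (wpow x m) (leftQuot s L) = leftQuot t L := by
    obtain ⟨k, rfl⟩ : ∃ k, m = k + 1 := ⟨m - 1, by omega⟩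
    rw [wpow_succ, ← lq_lq, hfx, hgE k]
  have hEq : ∀ a : List A,
      leftQuot (wpow x m ++ a) (leftQuot s L) = leftQuot a (leftQuot t L) := by
    intro a
    rw [← lq_lq, hfE]
  -- Lang(g) is neither empty nor everything
  have ha2 : ∃ a₂, a₂ ∈ leftQuot t L := by
    by_contra hno
    push_neg at hno
    apply hgh
    rw [← hgy]
    ext z
    exact iff_of_false (hno z) (fun hz => hno (y ++ z) hz)
  have ha3 : ∃ a₃, a₃ ∉ leftQuot t L := by
    by_contra hno
    push_neg at hno
    apply hgh
    rw [← hgy]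
    ext z
    exact iff_of_true (hno z) (hno (y ++ z))
  have hsplit : ∃ a₁, (a₁ ∈ leftQuot s L ∧ a₁ ∉ leftQuot t L) ∨
      (a₁ ∈ leftQuot t L ∧ a₁ ∉ leftQuot s L) := by
    by_contra hno
    push_neg at hno
    apply hfg
    ext a
    exact ⟨(hno a).1, (hno a).2⟩
  obtain ⟨a₂, ha₂⟩ := ha2
  obtain ⟨a₃, ha₃⟩ := ha3
  obtain ⟨a₁, hcase⟩ := hsplit
  rcases hcase with ⟨h1, h2⟩ | ⟨h1, h2⟩
  · -- a₁ ∈ Lang(f) \ Lang(g) : take u = a₃, v = a₁, w = a₂ ; [] in RHS, not in LHS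
    refine ⟨x, a₃, a₁, a₂, m, hm1, hidem, s, fun heq => ?_⟩
    have hR : ([] : List A) ∈ leftQuot (wpow x m ++ a₃) (leftQuot s L) ∪
        (leftQuot (wpow x m ++ a₂) (leftQuot s L) ∩ leftQuot a₁ (leftQuot s L)) := by
      refine Set.mem_union_right _ ⟨?_, ?_⟩
      · rw [hEq a₂]; exact (mem_nil_lq a₂ _).2 ha₂
      · exact (mem_nil_lq a₁ _).2 h1
    rw [← heq] at hR
    rcases hR with hA | ⟨hB, _⟩
    · rw [hEq a₃] at hA
      exact ha₃ ((mem_nil_lq a₃ _).1 hA)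
    · rw [hEq a₁] at hB
      exact h2 ((mem_nil_lq a₁ _).1 hB)
  · -- a₁ ∈ Lang(g) \ Lang(f) : take u = a₃, v = a₁, w = x^m ++ a₁ ; [] in LHS, not in RHS
    refine ⟨x, a₃, a₁, wpow x m ++ a₁, m, hm1, hidem, s, fun heq => ?_⟩
    have hL : ([] : List A) ∈ leftQuot (wpow x m ++ a₃) (leftQuot s L) ∪
        (leftQuot (wpow x m ++ a₁) (leftQuot s L) ∩
          leftQuot (wpow x m ++ a₁) (leftQuot s L)) := by
      refine Set.mem_union_right _ ⟨?_, ?_⟩ <;>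
        · rw [hEq a₁]; exact (mem_nil_lq a₁ _).2 h1
    rw [heq] at hL
    rcases hL with hA | ⟨_, hB⟩
    · rw [hEq a₃] at hA
      exact ha₃ ((mem_nil_lq a₃ _).1 hA)
    · exact h2 ((mem_nil_lq a₁ _).1 hB)
end
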